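/- For E > 0 and c ∈ ℝ, the function φ_{E,c}(y) = (2√(2E)/(c²+4E)^{1/4}) · 1/√(cosh(2√E y) − c/√(c²+4E)) is a positive even solution of the ODE −φ'' + E φ + (c/2) φ³ − (3/16) φ⁵ = 0 on ℝ. -/

import Mathlib

/-- The bright-soliton profile `φ_{E,c}` of the DNLS equation: for `E > 0` and `c ∈ ℝ`,
`φ_{E,c}(y) = (2√(2E)/(c²+4E)^{1/4}) · (cosh(2√E y) − c/√(c²+4E))^{-1/2}`
is a positive even solution of `−φ'' + E φ + (c/2) φ³ − (3/16) φ⁵ = 0` on `ℝ`. -/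
theorem bright_soliton_profile_solves_ODE (E c : ℝ) (hE : 0 < E) :
    ∀ φ : ℝ → ℝ,
      (φ = fun y =>
        (2 * Real.sqrt (2 * E) / (c ^ 2 + 4 * E) ^ ((1 : ℝ) / 4)) *
          (1 / Real.sqrt (Real.cosh (2 * Real.sqrt E * y) - c / Real.sqrt (c ^ 2 + 4 * E)))) →
      (∀ y, 0 < φ y) ∧ (∀ y, φ (-y) = φ y) ∧
        (∀ y, -deriv (deriv φ) y + E * φ y + c / 2 * φ y ^ 3 - 3 / 16 * φ y ^ 5 = 0) := by
  intro φ hφ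
  subst hφ
  set k := Real.sqrt E with hk_def
  have hk : 0 < k := Real.sqrt_pos.mpr hE
  have hk2 : k ^ 2 = E := Real.sq_sqrt hE.le
  have hcD : (0:ℝ) < c ^ 2 + 4 * E := by positivity
  set D := Real.sqrt (c ^ 2 + 4 * E) with hD_def
  have hD : 0 < D := Real.sqrt_pos.mpr hcD
  have hD2 : D ^ 2 = c ^ 2 + 4 * E := Real.sq_sqrt hcD.le
  have hcltD : c < D := by
    have h1 : c ≤ |c| := le_abs_self c
    have h2 : |c| < D := by
      rw [← Real.sqrt_sq_eq_abs]
      exact Real.sqrt_lt_sqrt (sq_nonneg c) (by linarith)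
    linarith
  have hu : ∀ y : ℝ, 0 < Real.cosh (2 * k * y) - c / D := by
    intro y
    have h1 : (1:ℝ) ≤ Real.cosh (2 * k * y) := Real.one_le_cosh _
    have h2 : c / D < 1 := (div_lt_one hD).mpr hcltD
    linarith
  set A := 2 * Real.sqrt (2 * E) / (c ^ 2 + 4 * E) ^ ((1 : ℝ) / 4) with hA_def
  have hBpos : (0:ℝ) < (c ^ 2 + 4 * E) ^ ((1 : ℝ) / 4) := Real.rpow_pos_of_pos hcD _
  have hA : 0 < A := by
    apply div_pos _ hBpos
    have := Real.sqrt_pos.mpr (by linarith : (0:ℝ) < 2 * E)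
    linarith
  have hB2 : ((c ^ 2 + 4 * E) ^ ((1 : ℝ) / 4)) ^ 2 = D := by
    rw [hD_def, Real.sqrt_eq_rpow, ← Real.rpow_natCast _ 2, ← Real.rpow_mul hcD.le]
    norm_num
  have hA2 : A ^ 2 * D = 8 * E := by
    rw [hA_def, div_pow, hB2, mul_pow, Real.sq_sqrt (by linarith : (0:ℝ) ≤ 2 * E)]
    field_simp
    ring
  refine ⟨?_, ?_, ?_⟩
  · intro y
    have := hu y
    positivity
  · intro y
    simp only [mul_neg, Real.cosh_neg]
  · -- derivative of cosh(2ky) - c/D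
    have hu' : ∀ y : ℝ, HasDerivAt (fun y => Real.cosh (2 * k * y) - c / D)
        (2 * k * Real.sinh (2 * k * y)) y := by
      intro y
      have h1 : HasDerivAt (fun y : ℝ => 2 * k * y) (2 * k) y := by
        simpa using (hasDerivAt_id y).const_mul (2 * k)
      simpa [mul_comm] using h1.cosh.sub_const (c / D)
    have hφ' : ∀ y : ℝ, HasDerivAt
        (fun y => A * (1 / Real.sqrt (Real.cosh (2 * k * y) - c / D)))
        (-(A * k) * Real.sinh (2 * k * y) /
          ((Real.cosh (2 * k * y) - c / D) * Real.sqrt (Real.cosh (2 * k * y) - c / D))) y := by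
      intro y
      have hne : Real.cosh (2 * k * y) - c / D ≠ 0 := (hu y).ne'
      have hs := (hu' y).sqrt hne
      have hSpos : 0 < Real.sqrt (Real.cosh (2 * k * y) - c / D) := Real.sqrt_pos.mpr (hu y)
      have hinv := (hs.inv hSpos.ne').const_mul A
      simp only [one_div]
      refine hinv.congr_deriv ?_
      have hS2 : (Real.sqrt (Real.cosh (2 * k * y) - c / D)) ^ 2
          = Real.cosh (2 * k * y) - c / D := Real.sq_sqrt (hu y).le
      set S := Real.sqrt (Real.cosh (2 * k * y) - c / D) with hSdef
      rw [← hS2]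
      have hSne : S ≠ 0 := hSpos.ne'
      field_simp
    have hd1 : deriv (fun y => A * (1 / Real.sqrt (Real.cosh (2 * k * y) - c / D)))
        = fun y => -(A * k) * Real.sinh (2 * k * y) /
          ((Real.cosh (2 * k * y) - c / D) * Real.sqrt (Real.cosh (2 * k * y) - c / D)) :=
      funext fun y => (hφ' y).deriv
    intro y
    beta_reduce
    rw [hd1]
    have hne : Real.cosh (2 * k * y) - c / D ≠ 0 := (hu y).ne'
    have hSpos : 0 < Real.sqrt (Real.cosh (2 * k * y) - c / D) := Real.sqrt_pos.mpr (hu y)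
    have h1 : HasDerivAt (fun y : ℝ => 2 * k * y) (2 * k) y := by
      simpa using (hasDerivAt_id y).const_mul (2 * k)
    have hnum : HasDerivAt (fun y => -(A * k) * Real.sinh (2 * k * y))
        (-(A * k) * (Real.cosh (2 * k * y) * (2 * k))) y := h1.sinh.const_mul _
    have hden : HasDerivAt
        (fun y => (Real.cosh (2 * k * y) - c / D) * Real.sqrt (Real.cosh (2 * k * y) - c / D))
        (2 * k * Real.sinh (2 * k * y) * Real.sqrt (Real.cosh (2 * k * y) - c / D) +
          (Real.cosh (2 * k * y) - c / D) *
            (2 * k * Real.sinh (2 * k * y) / (2 * Real.sqrt (Real.cosh (2 * k * y) - c / D)))) y :=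
      (hu' y).mul ((hu' y).sqrt hne)
    have hdenne : (Real.cosh (2 * k * y) - c / D) * Real.sqrt (Real.cosh (2 * k * y) - c / D) ≠ 0 :=
      (mul_pos (hu y) hSpos).ne'
    have hdiv := hnum.div hden hdenne
    have hd2 : deriv (fun y => -(A * k) * Real.sinh (2 * k * y) /
          ((Real.cosh (2 * k * y) - c / D) * Real.sqrt (Real.cosh (2 * k * y) - c / D))) y
        = (-(A * k) * (Real.cosh (2 * k * y) * (2 * k)) *
            ((Real.cosh (2 * k * y) - c / D) * Real.sqrt (Real.cosh (2 * k * y) - c / D)) -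
           -(A * k) * Real.sinh (2 * k * y) *
            (2 * k * Real.sinh (2 * k * y) * Real.sqrt (Real.cosh (2 * k * y) - c / D) +
              (Real.cosh (2 * k * y) - c / D) *
                (2 * k * Real.sinh (2 * k * y) / (2 * Real.sqrt (Real.cosh (2 * k * y) - c / D))))) /
          ((Real.cosh (2 * k * y) - c / D) * Real.sqrt (Real.cosh (2 * k * y) - c / D)) ^ 2 :=
      hdiv.deriv
    rw [hd2]
    have hsh : Real.sinh (2 * k * y) ^ 2 = Real.cosh (2 * k * y) ^ 2 - 1 := by
      have := Real.cosh_sq (2 * k * y); linarith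
    have hS2 : (Real.sqrt (Real.cosh (2 * k * y) - c / D)) ^ 2
        = Real.cosh (2 * k * y) - c / D := Real.sq_sqrt (hu y).le
    set S := Real.sqrt (Real.cosh (2 * k * y) - c / D) with hSdef
    set sh := Real.sinh (2 * k * y) with hshdef
    set ch := Real.cosh (2 * k * y) with hchdef
    have hSne : S ≠ 0 := hSpos.ne'
    have hDne : D ≠ 0 := hD.ne'
    rw [← hS2]
    field_simp
    have hS2' : S ^ 2 * D = ch * D - c := by
      rw [hS2]; field_simp
    have hH2 : D ^ 2 * (16 * E * S ^ 4 + 32 * k ^ 2 * ch * S ^ 2 - 48 * k ^ 2 * sh ^ 2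
        + 8 * c * A ^ 2 * S ^ 2 - 3 * A ^ 4) = 0 := by
      linear_combination (32 * ch * S ^ 2 - 48 * sh ^ 2) * D ^ 2 * hk2
        + (-(48 * E * D ^ 2)) * hsh
        + (32 * E * ch * D + 16 * E * (S ^ 2 * D + ch * D - c) + 8 * c * A ^ 2 * D) * hS2'
        + (8 * c * (ch * D - c) - 3 * (A ^ 2 * D + 8 * E)) * hA2
        + 48 * E * hD2
    have hH : 16 * E * S ^ 4 + 32 * k ^ 2 * ch * S ^ 2 - 48 * k ^ 2 * sh ^ 2
        + 8 * c * A ^ 2 * S ^ 2 - 3 * A ^ 4 = 0 :=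
      (mul_eq_zero.mp hH2).resolve_left (pow_ne_zero 2 hDne)
    linear_combination (2 * A) * hH
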